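/- arXiv:2305.17625 — 2 statements merged into one kernel-verified Lean document; each statement's English description precedes it below -/
import Mathlib

section
/- (Performance bound controlled by value difference) Let M_src and M_tar be two MDPs differing only in transitions P_src and P_tar. For any policy π, η_{M_tar}(π) ≥ η_{M_src}(π) − (γ/(1−γ)) · E_{(s,a)∼ρ^π_{src}}[ | E_{s'∼P_src(·|s,a)}[V^π_{M_tar}(s')] − E_{s'∼P_tar(·|s,a)}[V^π_{M_tar}(s')] | ]. -/
open scoped BigOperators

noncomputable section

/-- Distribution over states at time `t`, starting from `ρ0`, following policy `pol`
in the MDP with transition kernel `P`. -/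
def stateDist {S A : Type} [Fintype S] [Fintype A]
    (P : S → A → S → ℝ) (pol : S → A → ℝ) (ρ0 : S → ℝ) : ℕ → S → ℝ
  | 0 => ρ0
  | t + 1 => fun s' => ∑ s : S, ∑ a : A, stateDist P pol ρ0 t s * pol s a * P s a s'

/-- Normalized discounted state-action occupancy measure. -/
def occupancy {S A : Type} [Fintype S] [Fintype A]
    (P : S → A → S → ℝ) (pol : S → A → ℝ) (ρ0 : S → ℝ) (γ : ℝ) (s : S) (a : A) : ℝ :=
  (1 - γ) * ∑' t : ℕ, γ ^ t * stateDist P pol ρ0 t s * pol s a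

/-- Normalized expected discounted return `η_M(π) = E_{(s,a)∼ρ^π_M}[r(s,a)]`. -/
def ret {S A : Type} [Fintype S] [Fintype A]
    (P : S → A → S → ℝ) (pol : S → A → ℝ) (ρ0 : S → ℝ) (γ : ℝ) (r : S → A → ℝ) : ℝ :=
  ∑ s : S, ∑ a : A, occupancy P pol ρ0 γ s a * r s a

/-- Value function `V^π(s)`: expected discounted return starting from state `s`. -/
def valueFn {S A : Type} [Fintype S] [Fintype A] [DecidableEq S]
    (P : S → A → S → ℝ) (pol : S → A → ℝ) (γ : ℝ) (r : S → A → ℝ) (s : S) : ℝ :=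
  ∑' t : ℕ, γ ^ t * ∑ s' : S, stateDist P pol (fun s'' => if s'' = s then 1 else 0) t s' *
    ∑ a : A, pol s' a * r s' a

/-- Action-value function `Q^π(s,a)`. -/
def qFn {S A : Type} [Fintype S] [Fintype A] [DecidableEq S]
    (P : S → A → S → ℝ) (pol : S → A → ℝ) (γ : ℝ) (r : S → A → ℝ) (s : S) (a : A) : ℝ :=
  r s a + γ * ∑ s' : S, P s a s' * valueFn P pol γ r s'

/-- Total variation distance between two distributions on a finite set. -/
def tvDist {X : Type} [Fintype X] (p q : X → ℝ) : ℝ :=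
  (1 / 2) * ∑ x : X, |p x - q x|

/-- `P` is a Markov kernel: nonnegative and each `P s a` sums to one. -/
def IsKernel {S A : Type} [Fintype S] (P : S → A → S → ℝ) : Prop :=
  ∀ s a, (∀ s', 0 ≤ P s a s') ∧ ∑ s' : S, P s a s' = 1

/-- `pol` is a (stochastic) policy. -/
def IsPolicy {S A : Type} [Fintype A] (pol : S → A → ℝ) : Prop :=
  ∀ s, (∀ a, 0 ≤ pol s a) ∧ ∑ a : A, pol s a = 1

/-- `ρ0` is a probability distribution over states. -/
def IsDist {S : Type} [Fintype S] (ρ0 : S → ℝ) : Prop :=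
  (∀ s, 0 ≤ ρ0 s) ∧ ∑ s : S, ρ0 s = 1

section Aux1
variable {S A : Type} [Fintype S] [Fintype A]

lemma stateDist_nonneg {P : S → A → S → ℝ} {pol : S → A → ℝ} {ρ0 : S → ℝ}
    (hP : IsKernel P) (hpol : IsPolicy pol) (h0 : ∀ s, 0 ≤ ρ0 s) :
    ∀ t s, 0 ≤ stateDist P pol ρ0 t s := by
  intro t
  induction t with
  | zero => exact h0
  | succ t ih =>
    intro s'
    apply Finset.sum_nonneg; intro s _
    apply Finset.sum_nonneg; intro a _
    exact mul_nonneg (mul_nonneg (ih s) ((hpol s).1 a)) ((hP s a).1 s')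

lemma stateDist_sum_one {P : S → A → S → ℝ} {pol : S → A → ℝ} {ρ0 : S → ℝ}
    (hP : IsKernel P) (hpol : IsPolicy pol) (h1 : ∑ s : S, ρ0 s = 1) :
    ∀ t, ∑ s : S, stateDist P pol ρ0 t s = 1 := by
  intro t
  induction t with
  | zero => exact h1
  | succ t ih =>
    have : ∀ s', stateDist P pol ρ0 (t+1) s'
        = ∑ s : S, ∑ a : A, stateDist P pol ρ0 t s * pol s a * P s a s' := fun _ => rfl
    simp only [this]
    rw [Finset.sum_comm]
    have h2 : ∀ s : S, ∑ s' : S, ∑ a : A, stateDist P pol ρ0 t s * pol s a * P s a s'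
        = stateDist P pol ρ0 t s := by
      intro s
      rw [Finset.sum_comm]
      have : ∀ a : A, ∑ s' : S, stateDist P pol ρ0 t s * pol s a * P s a s'
          = stateDist P pol ρ0 t s * pol s a := by
        intro a
        rw [← Finset.mul_sum, (hP s a).2, mul_one]
      simp only [this, ← Finset.mul_sum, (hpol s).2, mul_one]
    simp only [h2, ih]

lemma dist_dot_abs_le (d f : S → ℝ) (hd : ∀ s, 0 ≤ d s) (hd1 : ∑ s : S, d s = 1) :
    |∑ s : S, d s * f s| ≤ ∑ s : S, |f s| := by
  calc |∑ s : S, d s * f s| ≤ ∑ s : S, |d s * f s| := Finset.abs_sum_le_sum_abs _ _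
    _ ≤ ∑ s : S, |f s| := by
        apply Finset.sum_le_sum
        intro s _
        rw [abs_mul, abs_of_nonneg (hd s)]
        have hle : d s ≤ 1 := by
          rw [← hd1]
          exact Finset.single_le_sum (fun i _ => hd i) (Finset.mem_univ s)
        nlinarith [abs_nonneg (f s)]

lemma summable_geom_bound {γ C : ℝ} (hγ0 : 0 ≤ γ) (hγ1 : γ < 1) (g : ℕ → ℝ)
    (hg : ∀ t, |g t| ≤ C) : Summable (fun t => γ ^ t * g t) := by
  apply Summable.of_norm_bounded
    ((summable_geometric_of_lt_one hγ0 hγ1).mul_left C)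
  intro t
  rw [Real.norm_eq_abs, abs_mul, abs_pow, abs_of_nonneg hγ0, mul_comm]
  exact mul_le_mul_of_nonneg_right (hg t) (pow_nonneg hγ0 t)

lemma stateDist_shift (P : S → A → S → ℝ) (pol : S → A → ℝ) (ρ0 : S → ℝ) (t : ℕ) :
    stateDist P pol ρ0 (t + 1)
      = stateDist P pol (fun s' => ∑ s : S, ∑ a : A, ρ0 s * pol s a * P s a s') t := by
  induction t with
  | zero => rfl
  | succ t ih =>
    funext s'
    show ∑ s : S, ∑ a : A, stateDist P pol ρ0 (t+1) s * pol s a * P s a s' = _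
    rw [ih]
    rfl

lemma stateDist_linear [DecidableEq S] (P : S → A → S → ℝ) (pol : S → A → ℝ) (ρ0 : S → ℝ) :
    ∀ t s', stateDist P pol ρ0 t s'
      = ∑ s : S, ρ0 s * stateDist P pol (fun s'' => if s'' = s then 1 else 0) t s' := by
  intro t
  induction t with
  | zero =>
    intro s'
    show ρ0 s' = ∑ s : S, ρ0 s * (if s' = s then 1 else 0)
    simp
  | succ t ih =>
    intro s'
    show ∑ s1 : S, ∑ a : A, stateDist P pol ρ0 t s1 * pol s1 a * P s1 a s' = _
    have : ∀ s : S, ρ0 s * stateDist P pol (fun s'' => if s'' = s then 1 else 0) (t+1) s'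
        = ∑ s1 : S, ∑ a : A, ρ0 s * stateDist P pol (fun s'' => if s'' = s then 1 else 0) t s1
            * pol s1 a * P s1 a s' := by
      intro s
      show ρ0 s * ∑ s1 : S, ∑ a : A, _ = _
      rw [Finset.mul_sum]
      congr 1; funext s1
      rw [Finset.mul_sum]
      congr 1; funext a
      ring
    simp only [this, ih]
    rw [show (∑ s1 : S, ∑ a : A,
        (∑ s : S, ρ0 s * stateDist P pol (fun s'' => if s'' = s then 1 else 0) t s1)
          * pol s1 a * P s1 a s')
      = ∑ s1 : S, ∑ a : A, ∑ s : S,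
        ρ0 s * stateDist P pol (fun s'' => if s'' = s then 1 else 0) t s1
          * pol s1 a * P s1 a s' from
      Finset.sum_congr rfl fun s1 _ => Finset.sum_congr rfl fun a _ => by
        rw [Finset.sum_mul, Finset.sum_mul]]
    rw [show (∑ s1 : S, ∑ a : A, ∑ s : S,
        ρ0 s * stateDist P pol (fun s'' => if s'' = s then 1 else 0) t s1
          * pol s1 a * P s1 a s')
      = ∑ s1 : S, ∑ s : S, ∑ a : A,
        ρ0 s * stateDist P pol (fun s'' => if s'' = s then 1 else 0) t s1
          * pol s1 a * P s1 a s' from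
      Finset.sum_congr rfl fun s1 _ => Finset.sum_comm]
    exact Finset.sum_comm

end Aux1

section Aux2
variable {S A : Type} [Fintype S] [Fintype A] [DecidableEq S]
variable {P : S → A → S → ℝ} {pol : S → A → ℝ} {γ : ℝ} {r : S → A → ℝ}

/-- inner bound used over and over -/
lemma f_bound (hP : IsKernel P) (hpol : IsPolicy pol) (s : S) (t : ℕ) :
    |∑ s' : S, stateDist P pol (fun s'' => if s'' = s then 1 else 0) t s' *
      ∑ a : A, pol s' a * r s' a| ≤ ∑ s' : S, |∑ a : A, pol s' a * r s' a| := by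
  apply dist_dot_abs_le
  · exact stateDist_nonneg hP hpol (fun s'' => by split <;> norm_num) t
  · exact stateDist_sum_one hP hpol (by simp) t

lemma f_summable (hP : IsKernel P) (hpol : IsPolicy pol) (hγ0 : 0 ≤ γ) (hγ1 : γ < 1) (s : S) :
    Summable (fun t : ℕ => γ ^ t *
      ∑ s' : S, stateDist P pol (fun s'' => if s'' = s then 1 else 0) t s' *
        ∑ a : A, pol s' a * r s' a) :=
  summable_geom_bound hγ0 hγ1 _ (f_bound hP hpol s)

lemma dot_valueFn (hP : IsKernel P) (hpol : IsPolicy pol) (hγ0 : 0 ≤ γ) (hγ1 : γ < 1)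
    (ρ0 : S → ℝ) :
    ∑ s : S, ρ0 s * valueFn P pol γ r s
      = ∑' t : ℕ, γ ^ t * ∑ s' : S, stateDist P pol ρ0 t s' *
          ∑ a : A, pol s' a * r s' a := by
  have h1 : ∀ s : S, ρ0 s * valueFn P pol γ r s
      = ∑' t : ℕ, ρ0 s * (γ ^ t *
          ∑ s' : S, stateDist P pol (fun s'' => if s'' = s then 1 else 0) t s' *
            ∑ a : A, pol s' a * r s' a) := by
    intro s
    rw [tsum_mul_left]
    rfl
  simp only [h1]
  rw [← Summable.tsum_finsetSum (fun s _ => (f_summable hP hpol hγ0 hγ1 s).mul_left (ρ0 s))]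
  congr 1; funext t
  rw [eq_comm]
  calc γ ^ t * ∑ s' : S, stateDist P pol ρ0 t s' * ∑ a : A, pol s' a * r s' a
      = ∑ s' : S, γ ^ t * (stateDist P pol ρ0 t s' * ∑ a : A, pol s' a * r s' a) :=
        Finset.mul_sum _ _ _
    _ = ∑ s' : S, ∑ s : S, ρ0 s *
          (γ ^ t * (stateDist P pol (fun s'' => if s'' = s then 1 else 0) t s' *
            ∑ a : A, pol s' a * r s' a)) := by
        apply Finset.sum_congr rfl
        intro s' _
        rw [stateDist_linear P pol ρ0 t s', Finset.sum_mul, Finset.mul_sum]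
        exact Finset.sum_congr rfl fun s _ => by ring
    _ = ∑ s : S, ∑ s' : S, ρ0 s *
          (γ ^ t * (stateDist P pol (fun s'' => if s'' = s then 1 else 0) t s' *
            ∑ a : A, pol s' a * r s' a)) := Finset.sum_comm
    _ = ∑ s : S, ρ0 s * (γ ^ t *
          ∑ s' : S, stateDist P pol (fun s'' => if s'' = s then 1 else 0) t s' *
            ∑ a : A, pol s' a * r s' a) := by
        apply Finset.sum_congr rfl
        intro s _
        rw [Finset.mul_sum, Finset.mul_sum]

lemma valueFn_bellman (hP : IsKernel P) (hpol : IsPolicy pol) (hγ0 : 0 ≤ γ) (hγ1 : γ < 1)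
    (s : S) :
    valueFn P pol γ r s = (∑ a : A, pol s a * r s a)
      + γ * ∑ a : A, pol s a * ∑ s' : S, P s a s' * valueFn P pol γ r s' := by
  have hf := f_summable (r := r) hP hpol hγ0 hγ1 s
  have h0 : valueFn P pol γ r s
      = (γ ^ 0 * ∑ s' : S, stateDist P pol (fun s'' => if s'' = s then 1 else 0) 0 s' *
          ∑ a : A, pol s' a * r s' a)
        + ∑' t : ℕ, γ ^ (t+1) *
            ∑ s' : S, stateDist P pol (fun s'' => if s'' = s then 1 else 0) (t+1) s' *
              ∑ a : A, pol s' a * r s' a := Summable.tsum_eq_zero_add hf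
  rw [h0]
  congr 1
  · show γ ^ 0 * ∑ s' : S, (if s' = s then (1:ℝ) else 0) * _ = _
    simp
  · simp only [stateDist_shift P pol _ _]
    have key := dot_valueFn (r := r) hP hpol hγ0 hγ1
      (fun s' => ∑ s0 : S, ∑ a : A, (if s0 = s then (1:ℝ) else 0) * pol s0 a * P s0 a s')
    rw [show (∑' t : ℕ, γ ^ (t+1) *
        ∑ s' : S, stateDist P pol
          (fun s'2 => ∑ s0 : S, ∑ a : A,
            (if s0 = s then (1:ℝ) else 0) * pol s0 a * P s0 a s'2) t s' *
          ∑ a : A, pol s' a * r s' a)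
      = γ * ∑' t : ℕ, γ ^ t *
        ∑ s' : S, stateDist P pol
          (fun s'2 => ∑ s0 : S, ∑ a : A,
            (if s0 = s then (1:ℝ) else 0) * pol s0 a * P s0 a s'2) t s' *
          ∑ a : A, pol s' a * r s' a from by
      rw [← tsum_mul_left]
      congr 1; funext t; ring]
    rw [← key]
    have hstep : ∀ s1 : S, (∑ s0 : S, ∑ a : A,
        (if s0 = s then (1:ℝ) else 0) * pol s0 a * P s0 a s1)
        = ∑ a : A, pol s a * P s a s1 := by
      intro s1
      rw [Finset.sum_comm]
      apply Finset.sum_congr rfl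
      intro a _
      simp
    congr 1
    rw [show (∑ s1 : S, (∑ s0 : S, ∑ a : A,
          (if s0 = s then (1:ℝ) else 0) * pol s0 a * P s0 a s1) * valueFn P pol γ r s1)
        = ∑ s1 : S, ∑ a : A, pol s a * P s a s1 * valueFn P pol γ r s1 from
      Finset.sum_congr rfl fun s1 _ => by rw [hstep s1, Finset.sum_mul]]
    rw [Finset.sum_comm]
    congr 1; funext a
    rw [Finset.mul_sum]
    congr 1; funext s1
    ring

end Aux2

section Ret
variable {S A : Type} [Fintype S] [Fintype A]
variable {P : S → A → S → ℝ} {pol : S → A → ℝ} {γ : ℝ} {ρ0 : S → ℝ}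

lemma dpol_bound (hP : IsKernel P) (hpol : IsPolicy pol) (hρ0 : IsDist ρ0)
    (s : S) (a : A) (t : ℕ) : |stateDist P pol ρ0 t s * pol s a| ≤ 1 := by
  have h1 : 0 ≤ stateDist P pol ρ0 t s := stateDist_nonneg hP hpol hρ0.1 t s
  have h2 : stateDist P pol ρ0 t s ≤ 1 := by
    rw [← stateDist_sum_one hP hpol hρ0.2 t]
    exact Finset.single_le_sum (fun i _ => stateDist_nonneg hP hpol hρ0.1 t i)
      (Finset.mem_univ s)
  have h3 := (hpol s).1 a
  have h4 : pol s a ≤ 1 := by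
    rw [← (hpol s).2]
    exact Finset.single_le_sum (fun i _ => (hpol s).1 i) (Finset.mem_univ a)
  rw [abs_of_nonneg (mul_nonneg h1 h3)]
  nlinarith

lemma dpol_summable (hP : IsKernel P) (hpol : IsPolicy pol) (hρ0 : IsDist ρ0)
    (hγ0 : 0 ≤ γ) (hγ1 : γ < 1) (s : S) (a : A) (c : ℝ) :
    Summable (fun t : ℕ => γ ^ t * (stateDist P pol ρ0 t s * pol s a * c)) := by
  apply summable_geom_bound hγ0 hγ1
  intro t
  rw [abs_mul]
  calc |stateDist P pol ρ0 t s * pol s a| * |c| ≤ 1 * |c| :=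
        mul_le_mul_of_nonneg_right (dpol_bound hP hpol hρ0 s a t) (abs_nonneg c)
    _ = |c| := one_mul _

/-- generic weighted-occupancy rearrangement -/
lemma occ_dot (hP : IsKernel P) (hpol : IsPolicy pol) (hρ0 : IsDist ρ0)
    (hγ0 : 0 ≤ γ) (hγ1 : γ < 1) (c : S → A → ℝ) :
    ∑ s : S, ∑ a : A, occupancy P pol ρ0 γ s a * c s a
      = (1 - γ) * ∑' t : ℕ, γ ^ t *
          ∑ s : S, stateDist P pol ρ0 t s * ∑ a : A, pol s a * c s a := by
  have h1 : ∀ s a, occupancy P pol ρ0 γ s a * c s a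
      = (1 - γ) * ∑' t : ℕ, γ ^ t * (stateDist P pol ρ0 t s * pol s a * c s a) := by
    intro s a
    rw [occupancy, mul_assoc, ← tsum_mul_right]
    exact congrArg _ (tsum_congr fun t => by ring)
  simp only [h1, ← Finset.mul_sum]
  congr 1
  have h2 : ∀ s : S, ∑ a : A, ∑' t : ℕ, γ ^ t * (stateDist P pol ρ0 t s * pol s a * c s a)
      = ∑' t : ℕ, ∑ a : A, γ ^ t * (stateDist P pol ρ0 t s * pol s a * c s a) :=
    fun s => (Summable.tsum_finsetSum (fun a _ => dpol_summable hP hpol hρ0 hγ0 hγ1 s a (c s a))).symm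
  simp only [h2]
  rw [← Summable.tsum_finsetSum (fun s _ => summable_sum
    (fun a _ => dpol_summable hP hpol hρ0 hγ0 hγ1 s a (c s a)))]
  congr 1; funext t
  rw [Finset.mul_sum]
  apply Finset.sum_congr rfl
  intro s _
  rw [Finset.mul_sum, Finset.mul_sum]
  apply Finset.sum_congr rfl
  intro a _
  ring

end Ret

section Main
variable {S A : Type} [Fintype S] [Fintype A] [DecidableEq S]
variable {Psrc Ptar : S → A → S → ℝ} {pol : S → A → ℝ} {ρ0 : S → ℝ} {γ : ℝ} {r : S → A → ℝ}

lemma ret_diff (hPsrc : IsKernel Psrc) (hPtar : IsKernel Ptar) (hpol : IsPolicy pol)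
    (hρ0 : IsDist ρ0) (hγ0 : 0 ≤ γ) (hγ1 : γ < 1) :
    ret Ptar pol ρ0 γ r = ret Psrc pol ρ0 γ r - (1 - γ) * γ *
      ∑' t : ℕ, γ ^ t * ∑ s : S, stateDist Psrc pol ρ0 t s *
        ∑ a : A, pol s a * ((∑ s' : S, Psrc s a s' * valueFn Ptar pol γ r s') -
                             (∑ s' : S, Ptar s a s' * valueFn Ptar pol γ r s')) := by
  set V : S → ℝ := valueFn Ptar pol γ r with hVdef
  set d : ℕ → S → ℝ := stateDist Psrc pol ρ0 with hddef
  set R : S → ℝ := fun s => ∑ a : A, pol s a * r s a with hRdef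
  set Y : ℕ → ℝ := fun t => ∑ s : S, d t s *
    ∑ a : A, pol s a * ((∑ s' : S, Psrc s a s' * V s') - (∑ s' : S, Ptar s a s' * V s'))
    with hYdef
  set W : ℕ → ℝ := fun t => ∑ s : S, d t s * V s with hWdef
  have hdnn : ∀ t s, 0 ≤ d t s := stateDist_nonneg hPsrc hpol hρ0.1
  have hdone : ∀ t, ∑ s : S, d t s = 1 := stateDist_sum_one hPsrc hpol hρ0.2
  -- Step A: Bellman-based recursion for W
  have hX : ∀ t, ∑ s : S, d t s * ∑ a : A, pol s a * ∑ s' : S, Psrc s a s' * V s'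
      = W (t + 1) := by
    intro t
    rw [hWdef]
    have hd1 : ∀ s' : S, d (t+1) s' = ∑ s : S, ∑ a : A, d t s * pol s a * Psrc s a s' :=
      fun _ => rfl
    simp only [hd1]
    rw [eq_comm]
    calc ∑ s' : S, (∑ s : S, ∑ a : A, d t s * pol s a * Psrc s a s') * V s'
        = ∑ s' : S, ∑ s : S, ∑ a : A, d t s * pol s a * Psrc s a s' * V s' := by
          apply Finset.sum_congr rfl; intro s' _
          rw [Finset.sum_mul]
          exact Finset.sum_congr rfl fun s _ => by rw [Finset.sum_mul]
      _ = ∑ s : S, ∑ s' : S, ∑ a : A, d t s * pol s a * Psrc s a s' * V s' :=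
          Finset.sum_comm
      _ = ∑ s : S, ∑ a : A, ∑ s' : S, d t s * pol s a * Psrc s a s' * V s' :=
          Finset.sum_congr rfl fun s _ => Finset.sum_comm
      _ = ∑ s : S, d t s * ∑ a : A, pol s a * ∑ s' : S, Psrc s a s' * V s' := by
          apply Finset.sum_congr rfl; intro s _
          rw [Finset.mul_sum]
          apply Finset.sum_congr rfl; intro a _
          rw [Finset.mul_sum, Finset.mul_sum]
          exact Finset.sum_congr rfl fun s' _ => by ring
  have hW : ∀ t, W t = (∑ s : S, d t s * R s) + γ * (W (t + 1) - Y t) := by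
    intro t
    have hbell : ∀ s : S, V s = R s + γ * ∑ a : A, pol s a * ∑ s' : S, Ptar s a s' * V s' :=
      fun s => valueFn_bellman hPtar hpol hγ0 hγ1 s
    calc W t = ∑ s : S, d t s * (R s + γ * ∑ a : A, pol s a * ∑ s' : S, Ptar s a s' * V s')
          := Finset.sum_congr rfl fun s _ => by rw [← hbell s]
      _ = (∑ s : S, d t s * R s)
          + γ * ∑ s : S, d t s * ∑ a : A, pol s a * ∑ s' : S, Ptar s a s' * V s' := by
          rw [Finset.mul_sum, ← Finset.sum_add_distrib]
          exact Finset.sum_congr rfl fun s _ => by ring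
      _ = (∑ s : S, d t s * R s)
          + γ * ((∑ s : S, d t s * ∑ a : A, pol s a * ∑ s' : S, Psrc s a s' * V s') - Y t)
          := by
          congr 1
          rw [hYdef]
          congr 1
          rw [← Finset.sum_sub_distrib]
          apply Finset.sum_congr rfl; intro s _
          rw [← mul_sub, ← Finset.sum_sub_distrib]
          congr 1
          exact Finset.sum_congr rfl fun a _ => by ring
      _ = (∑ s : S, d t s * R s) + γ * (W (t + 1) - Y t) := by rw [hX t]
  -- Step B: bounds and summability
  have hWb : ∀ t, |W t| ≤ ∑ s : S, |V s| := fun t =>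
    dist_dot_abs_le (d t) V (hdnn t) (hdone t)
  have hgs : Summable (fun t : ℕ => γ ^ t * ∑ s : S, d t s * R s) :=
    summable_geom_bound hγ0 hγ1 _ (fun t => dist_dot_abs_le (d t) R (hdnn t) (hdone t))
  have hYs : Summable (fun t : ℕ => γ ^ t * Y t) := by
    apply summable_geom_bound hγ0 hγ1
    intro t
    exact dist_dot_abs_le (d t) _ (hdnn t) (hdone t)
  -- Step C: telescoping
  have hFeq : ∀ t : ℕ, γ ^ t * W t - γ ^ (t+1) * W (t+1)
      = γ ^ t * ∑ s : S, d t s * R s - γ * (γ ^ t * Y t) := by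
    intro t
    rw [hW t]
    ring
  have hFs : Summable (fun t : ℕ => γ ^ t * W t - γ ^ (t+1) * W (t+1)) := by
    simp only [hFeq]
    exact hgs.sub (hYs.mul_left γ)
  have htendW : Filter.Tendsto (fun t : ℕ => γ ^ t * W t) Filter.atTop (nhds 0) := by
    refine squeeze_zero_norm (a := fun t => (∑ s : S, |V s|) * γ ^ t) (fun t => ?_) ?_
    · rw [Real.norm_eq_abs, abs_mul, abs_pow, abs_of_nonneg hγ0, mul_comm]
      exact mul_le_mul_of_nonneg_right (hWb t) (pow_nonneg hγ0 t)
    · simpa using (tendsto_pow_atTop_nhds_zero_of_lt_one hγ0 hγ1).const_mul (∑ s : S, |V s|)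
  have htsumF : ∑' t : ℕ, (γ ^ t * W t - γ ^ (t+1) * W (t+1)) = W 0 := by
    have h2 := hFs.hasSum.tendsto_sum_nat
    have h3 : Filter.Tendsto
        (fun n => ∑ i ∈ Finset.range n, (γ ^ i * W i - γ ^ (i+1) * W (i+1)))
        Filter.atTop (nhds (W 0)) := by
      have : ∀ n, ∑ i ∈ Finset.range n, (γ ^ i * W i - γ ^ (i+1) * W (i+1))
          = γ ^ 0 * W 0 - γ ^ n * W n := fun n =>
        Finset.sum_range_sub' (fun i => γ ^ i * W i) n
      simp only [this, pow_zero, one_mul]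
      simpa using tendsto_const_nhds.sub htendW
    exact tendsto_nhds_unique h2 h3
  have hEq1 : (∑' t : ℕ, γ ^ t * ∑ s : S, d t s * R s) - γ * (∑' t : ℕ, γ ^ t * Y t)
      = W 0 := by
    rw [← tsum_mul_left, ← Summable.tsum_sub hgs (hYs.mul_left γ)]
    rw [← htsumF]
    exact tsum_congr fun t => (hFeq t).symm
  -- Step D: identification with returns
  have hret_tar : ret Ptar pol ρ0 γ r = (1 - γ) * W 0 := by
    rw [show ret Ptar pol ρ0 γ r = ∑ s : S, ∑ a : A, occupancy Ptar pol ρ0 γ s a * r s a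
      from rfl]
    rw [occ_dot hPtar hpol hρ0 hγ0 hγ1 r]
    congr 1
    rw [hWdef, hddef, ← dot_valueFn hPtar hpol hγ0 hγ1 ρ0]
    rfl
  have hret_src : ret Psrc pol ρ0 γ r
      = (1 - γ) * ∑' t : ℕ, γ ^ t * ∑ s : S, d t s * R s := by
    rw [show ret Psrc pol ρ0 γ r = ∑ s : S, ∑ a : A, occupancy Psrc pol ρ0 γ s a * r s a
      from rfl]
    exact occ_dot hPsrc hpol hρ0 hγ0 hγ1 r
  rw [hret_tar, hret_src, ← hEq1]
  ring
end Main

theorem performance_bound_value_difference {S A : Type} [Fintype S] [Fintype A] [DecidableEq S]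
    (Psrc Ptar : S → A → S → ℝ) (pol : S → A → ℝ) (ρ0 : S → ℝ) (γ : ℝ)
    (r : S → A → ℝ)
    (hPsrc : IsKernel Psrc) (hPtar : IsKernel Ptar) (hpol : IsPolicy pol) (hρ0 : IsDist ρ0)
    (hγ0 : 0 ≤ γ) (hγ1 : γ < 1) :
    ret Ptar pol ρ0 γ r ≥
      ret Psrc pol ρ0 γ r -
        (γ / (1 - γ)) *
          ∑ s : S, ∑ a : A, occupancy Psrc pol ρ0 γ s a *
            |(∑ s' : S, Psrc s a s' * valueFn Ptar pol γ r s') -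
             (∑ s' : S, Ptar s a s' * valueFn Ptar pol γ r s')| := by
  set V : S → ℝ := valueFn Ptar pol γ r with hVdef
  set d : ℕ → S → ℝ := stateDist Psrc pol ρ0 with hddef
  set δ' : S → A → ℝ := fun s a =>
    (∑ s' : S, Psrc s a s' * V s') - (∑ s' : S, Ptar s a s' * V s') with hδdef
  have hdnn : ∀ t s, 0 ≤ d t s := stateDist_nonneg hPsrc hpol hρ0.1
  have hdone : ∀ t, ∑ s : S, d t s = 1 := stateDist_sum_one hPsrc hpol hρ0.2
  have hγpos : 0 < 1 - γ := by linarith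
  set Y : ℕ → ℝ := fun t => ∑ s : S, d t s * ∑ a : A, pol s a * δ' s a with hYdef
  set B : ℕ → ℝ := fun t => ∑ s : S, d t s * ∑ a : A, pol s a * |δ' s a| with hBdef
  have hYs : Summable (fun t : ℕ => γ ^ t * Y t) :=
    summable_geom_bound hγ0 hγ1 _ (fun t => dist_dot_abs_le (d t) _ (hdnn t) (hdone t))
  have hBs : Summable (fun t : ℕ => γ ^ t * B t) :=
    summable_geom_bound hγ0 hγ1 _ (fun t => dist_dot_abs_le (d t) _ (hdnn t) (hdone t))
  set Ty : ℝ := ∑' t : ℕ, γ ^ t * Y t with hTydef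
  set Tb : ℝ := ∑' t : ℕ, γ ^ t * B t with hTbdef
  have hTyTb : Ty ≤ Tb := by
    apply Summable.tsum_le_tsum _ hYs hBs
    intro t
    apply mul_le_mul_of_nonneg_left _ (pow_nonneg hγ0 t)
    apply Finset.sum_le_sum
    intro s _
    apply mul_le_mul_of_nonneg_left _ (hdnn t s)
    apply Finset.sum_le_sum
    intro a _
    exact mul_le_mul_of_nonneg_left (le_abs_self _) ((hpol s).1 a)
  have hTbnn : 0 ≤ Tb := by
    apply tsum_nonneg
    intro t
    apply mul_nonneg (pow_nonneg hγ0 t)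
    apply Finset.sum_nonneg
    intro s _
    apply mul_nonneg (hdnn t s)
    apply Finset.sum_nonneg
    intro a _
    exact mul_nonneg ((hpol s).1 a) (abs_nonneg _)
  have hdiff : ret Ptar pol ρ0 γ r = ret Psrc pol ρ0 γ r - (1 - γ) * γ * Ty :=
    ret_diff hPsrc hPtar hpol hρ0 hγ0 hγ1
  have hpen : ∑ s : S, ∑ a : A, occupancy Psrc pol ρ0 γ s a * |δ' s a| = (1 - γ) * Tb :=
    occ_dot hPsrc hpol hρ0 hγ0 hγ1 (fun s a => |δ' s a|)
  have hgoal : ret Psrc pol ρ0 γ r -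
      (γ / (1 - γ)) * ∑ s : S, ∑ a : A, occupancy Psrc pol ρ0 γ s a * |δ' s a|
      = ret Psrc pol ρ0 γ r - γ * Tb := by
    rw [hpen]
    field_simp
  rw [ge_iff_le, hgoal, hdiff]
  nlinarith [mul_nonneg hγ0 hTbnn, mul_nonneg (mul_nonneg hγ0 hγ0) hTbnn,
    mul_le_mul_of_nonneg_left hTyTb (mul_nonneg hγ0 (le_of_lt hγpos))]
end
end

section
/- (Pinsker-type dynamics bound, DARC form) Under the setting of two MDPs M_src, M_tar with rewards in [0, r_max] differing only in dynamics, for any policy π: η_{M_tar}(π) ≥ η_{M_src}(π) − (γ r_max/(1−γ)²) · √(2 · E_{(s,a)∼ρ^π_{src}}[ D_KL(P_src(·|s,a) ‖ P_tar(·|s,a)) ]). -/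
open scoped BigOperators

noncomputable section

/-- KL divergence between two distributions on a finite set. -/
def klDiv {X : Type} [Fintype X] (p q : X → ℝ) : ℝ :=
  ∑ x : X, p x * Real.log (p x / q x)

/- ===== Auxiliary lemmas ===== -/

lemma aux_key2 (p q : ℝ) (hp : 0 < p) (hq : 0 < q) :
    (Real.sqrt p - Real.sqrt q) ^ 2 ≤ p * Real.log (p / q) - p + q := by
  have hsp : 0 < Real.sqrt p := Real.sqrt_pos.mpr hp
  have hsq : 0 < Real.sqrt q := Real.sqrt_pos.mpr hq
  have hsp2 : Real.sqrt p ^ 2 = p := Real.sq_sqrt hp.le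
  have hsq2 : Real.sqrt q ^ 2 = q := Real.sq_sqrt hq.le
  have hratio : 0 < Real.sqrt p / Real.sqrt q := div_pos hsp hsq
  have hlog : 1 - (Real.sqrt p / Real.sqrt q)⁻¹ ≤ Real.log (Real.sqrt p / Real.sqrt q) :=
    Real.one_sub_inv_le_log_of_pos hratio
  have hlogeq : Real.log (p / q) = 2 * Real.log (Real.sqrt p / Real.sqrt q) := by
    rw [Real.log_div hsp.ne' hsq.ne', Real.log_div hp.ne' hq.ne',
      Real.log_sqrt hp.le, Real.log_sqrt hq.le]
    ring
  have hinv : (Real.sqrt p / Real.sqrt q)⁻¹ = Real.sqrt q / Real.sqrt p := by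
    rw [inv_div]
  rw [hinv] at hlog
  have h1 : p * Real.log (p / q) ≥ 2 * p - 2 * Real.sqrt p * Real.sqrt q := by
    rw [hlogeq]
    have := mul_le_mul_of_nonneg_left hlog hp.le
    calc 2 * p - 2 * Real.sqrt p * Real.sqrt q
        = 2 * (p * (1 - Real.sqrt q / Real.sqrt p)) := by
          field_simp
          nlinarith [hsp2]
      _ ≤ 2 * (p * Real.log (Real.sqrt p / Real.sqrt q)) := by linarith
      _ = p * (2 * Real.log (Real.sqrt p / Real.sqrt q)) := by ring
  nlinarith [h1, hsp2, hsq2]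

lemma aux_pointwise_kl (p q : ℝ) (hp : 0 ≤ p) (hq : 0 ≤ q) (habs : 0 < p → 0 < q) :
    (p - q) ^ 2 / (p + 2 * q) ≤ (8 / 3) * (p * Real.log (p / q) - p + q) := by
  rcases eq_or_lt_of_le hp with hp0 | hp0
  · rcases eq_or_lt_of_le hq with hq0 | hq0
    · simp [← hp0, ← hq0]
    · rw [← hp0]
      have h2q : (0:ℝ) < 0 + 2 * q := by linarith
      rw [div_le_iff₀ h2q]
      simp only [zero_mul, zero_sub, zero_add]
      nlinarith [hq0]
  · have hq0 : 0 < q := habs hp0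
    have hw : 0 < p + 2 * q := by linarith
    have hk := aux_key2 p q hp0 hq0
    have hsp : Real.sqrt p ^ 2 = p := Real.sq_sqrt hp0.le
    have hsq : Real.sqrt q ^ 2 = q := Real.sq_sqrt hq0.le
    have hsp0 : 0 ≤ Real.sqrt p := Real.sqrt_nonneg _
    have hsq0 : 0 ≤ Real.sqrt q := Real.sqrt_nonneg _
    rw [div_le_iff₀ hw]
    have h2 : (p - q) ^ 2 ≤ (Real.sqrt p - Real.sqrt q) ^ 2 * ((8/3) * (p + 2 * q)) := by
      nlinarith [sq_nonneg (Real.sqrt p - Real.sqrt q), sq_nonneg (Real.sqrt p + Real.sqrt q),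
        sq_nonneg (Real.sqrt p * Real.sqrt q), mul_nonneg hsp0 hsq0,
        sq_nonneg ((Real.sqrt p - Real.sqrt q) * (Real.sqrt p + Real.sqrt q)),
        mul_nonneg (mul_nonneg hsp0 hsq0) (sq_nonneg (Real.sqrt p - Real.sqrt q))]
    calc (p - q) ^ 2 ≤ (Real.sqrt p - Real.sqrt q) ^ 2 * ((8/3) * (p + 2 * q)) := h2
      _ ≤ (p * Real.log (p / q) - p + q) * ((8/3) * (p + 2 * q)) := by
          apply mul_le_mul_of_nonneg_right hk
          positivity
      _ = 8 / 3 * (p * Real.log (p / q) - p + q) * (p + 2 * q) := by ring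

/-- weak Pinsker: tv² ≤ 2·KL. -/
lemma aux_pinsker {X : Type} [Fintype X] (p q : X → ℝ) (hp : ∀ x, 0 ≤ p x) (hq : ∀ x, 0 ≤ q x)
    (hp1 : ∑ x : X, p x = 1) (hq1 : ∑ x : X, q x = 1) (habs : ∀ x, 0 < p x → 0 < q x) :
    tvDist p q ^ 2 ≤ 2 * klDiv p q := by
  set w : X → ℝ := fun x => p x + 2 * q x with hw
  have hwnn : ∀ x, 0 ≤ w x := fun x => by have := hp x; have := hq x; simp [hw]; linarith
  have hwsum : ∑ x : X, w x = 3 := by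
    simp [hw, Finset.sum_add_distrib, ← Finset.mul_sum, hp1, hq1]; norm_num
  have hcs : (∑ x : X, |p x - q x|) ^ 2 ≤
      (∑ x : X, (p x - q x) ^ 2 / w x) * ∑ x : X, w x := by
    have := Finset.sum_mul_sq_le_sq_mul_sq Finset.univ
      (fun x => |p x - q x| / Real.sqrt (w x)) (fun x => Real.sqrt (w x))
    have he1 : ∀ x, |p x - q x| / Real.sqrt (w x) * Real.sqrt (w x) = |p x - q x| := by
      intro x
      rcases eq_or_lt_of_le (hwnn x) with h0 | h0
      · have hpx : p x = 0 := by have := hp x; have := hq x; simp [hw] at h0; linarith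
        have hqx : q x = 0 := by have := hp x; have := hq x; simp [hw] at h0; linarith
        simp [hpx, hqx]
      · field_simp
    have he2 : ∀ x, (|p x - q x| / Real.sqrt (w x)) ^ 2 = (p x - q x) ^ 2 / w x := by
      intro x
      rw [div_pow, sq_abs, Real.sq_sqrt (hwnn x)]
    have he3 : ∀ x, (Real.sqrt (w x)) ^ 2 = w x := fun x => Real.sq_sqrt (hwnn x)
    calc (∑ x : X, |p x - q x|) ^ 2
        = (∑ x : X, |p x - q x| / Real.sqrt (w x) * Real.sqrt (w x)) ^ 2 := by
          congr 1; exact (Finset.sum_congr rfl fun x _ => (he1 x)).symm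
      _ ≤ (∑ x : X, (|p x - q x| / Real.sqrt (w x)) ^ 2) * ∑ x : X, (Real.sqrt (w x)) ^ 2 := this
      _ = (∑ x : X, (p x - q x) ^ 2 / w x) * ∑ x : X, w x := by
          congr 1
          · exact Finset.sum_congr rfl fun x _ => he2 x
          · exact Finset.sum_congr rfl fun x _ => he3 x
  have hptw : ∑ x : X, (p x - q x) ^ 2 / w x ≤
      (8 / 3) * ∑ x : X, (p x * Real.log (p x / q x) - p x + q x) := by
    rw [Finset.mul_sum]
    exact Finset.sum_le_sum fun x _ => aux_pointwise_kl (p x) (q x) (hp x) (hq x) (habs x)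
  have hsum3 : ∑ x : X, (p x * Real.log (p x / q x) - p x + q x) = klDiv p q := by
    simp [klDiv, Finset.sum_add_distrib, Finset.sum_sub_distrib, hp1, hq1]
  have h8 : (∑ x : X, |p x - q x|) ^ 2 ≤ 8 * klDiv p q := by
    calc (∑ x : X, |p x - q x|) ^ 2 ≤ (∑ x : X, (p x - q x) ^ 2 / w x) * ∑ x : X, w x := hcs
      _ = (∑ x : X, (p x - q x) ^ 2 / w x) * 3 := by rw [hwsum]
      _ ≤ ((8 / 3) * klDiv p q) * 3 := by
          apply mul_le_mul_of_nonneg_right _ (by norm_num)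
          rw [← hsum3]; exact hptw
      _ = 8 * klDiv p q := by ring
  have htv : tvDist p q ^ 2 = (1/4) * (∑ x : X, |p x - q x|) ^ 2 := by
    simp [tvDist]; ring
  rw [htv]; linarith

section MDPAux
variable {S A : Type} [Fintype S] [Fintype A]

lemma aux_stateDist_nonneg {P : S → A → S → ℝ} {pol : S → A → ℝ} {ρ0 : S → ℝ}
    (hP : IsKernel P) (hpol : IsPolicy pol) (hρ0 : ∀ s, 0 ≤ ρ0 s) :
    ∀ t s, 0 ≤ stateDist P pol ρ0 t s := by
  intro t
  induction t with
  | zero => exact hρ0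
  | succ t ih =>
    intro s'
    apply Finset.sum_nonneg; intro s _
    apply Finset.sum_nonneg; intro a _
    exact mul_nonneg (mul_nonneg (ih s) ((hpol s).1 a)) ((hP s a).1 s')

lemma aux_stateDist_sum_one {P : S → A → S → ℝ} {pol : S → A → ℝ} {ρ0 : S → ℝ}
    (hP : IsKernel P) (hpol : IsPolicy pol) (hρ0 : ∑ s : S, ρ0 s = 1) :
    ∀ t, ∑ s : S, stateDist P pol ρ0 t s = 1 := by
  intro t
  induction t with
  | zero => exact hρ0
  | succ t ih =>
    show ∑ s' : S, ∑ s : S, ∑ a : A, stateDist P pol ρ0 t s * pol s a * P s a s' = 1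
    rw [Finset.sum_comm]
    have h : ∀ s : S, ∑ s' : S, ∑ a : A, stateDist P pol ρ0 t s * pol s a * P s a s'
        = stateDist P pol ρ0 t s := by
      intro s
      rw [Finset.sum_comm]
      have h2 : ∀ a : A, ∑ s' : S, stateDist P pol ρ0 t s * pol s a * P s a s'
          = stateDist P pol ρ0 t s * pol s a := by
        intro a
        rw [← Finset.mul_sum, (hP s a).2, mul_one]
      rw [Finset.sum_congr rfl fun a _ => h2 a, ← Finset.mul_sum, (hpol s).2, mul_one]
    rw [Finset.sum_congr rfl fun s _ => h s, ih]

lemma aux_stateDist_le_one {P : S → A → S → ℝ} {pol : S → A → ℝ} {ρ0 : S → ℝ}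
    (hP : IsKernel P) (hpol : IsPolicy pol) (hρ0 : IsDist ρ0) (t : ℕ) (s : S) :
    stateDist P pol ρ0 t s ≤ 1 := by
  have h1 := aux_stateDist_sum_one hP hpol hρ0.2 t
  have := Finset.single_le_sum (f := fun s => stateDist P pol ρ0 t s)
    (fun s _ => aux_stateDist_nonneg hP hpol hρ0.1 t s) (Finset.mem_univ s)
  linarith

lemma aux_summable_geom_bound {γ : ℝ} (hγ0 : 0 ≤ γ) (hγ1 : γ < 1) (c : ℕ → ℝ) (C : ℝ)
    (hc : ∀ t, |c t| ≤ C) : Summable (fun t => γ ^ t * c t) := by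
  apply Summable.of_norm_bounded
    ((summable_geometric_of_lt_one hγ0 hγ1).mul_left C)
  intro t
  rw [Real.norm_eq_abs, abs_mul, abs_pow, abs_of_nonneg hγ0, mul_comm]
  exact mul_le_mul_of_nonneg_right (hc t) (pow_nonneg hγ0 t)

lemma aux_occ_sum_eq {P : S → A → S → ℝ} {pol : S → A → ℝ} {ρ0 : S → ℝ} {γ : ℝ}
    (hP : IsKernel P) (hpol : IsPolicy pol) (hρ0 : IsDist ρ0)
    (hγ0 : 0 ≤ γ) (hγ1 : γ < 1) (g : S → A → ℝ) :
    ∑ s : S, ∑ a : A, occupancy P pol ρ0 γ s a * g s a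
      = (1 - γ) * ∑' t : ℕ, γ ^ t *
          ∑ s : S, stateDist P pol ρ0 t s * ∑ a : A, pol s a * g s a := by
  have hsumm : ∀ (s : S) (a : A),
      Summable (fun t => γ ^ t * stateDist P pol ρ0 t s * pol s a * g s a) := by
    intro s a
    have heq : (fun t => γ ^ t * stateDist P pol ρ0 t s * pol s a * g s a)
        = fun t => γ ^ t * (stateDist P pol ρ0 t s * pol s a * g s a) := by
      funext t; ring
    rw [heq]
    apply aux_summable_geom_bound hγ0 hγ1 _ (|pol s a * g s a|)
    intro t
    rw [abs_mul, abs_mul, abs_mul]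
    have h1 : |stateDist P pol ρ0 t s| ≤ 1 := by
      rw [abs_of_nonneg (aux_stateDist_nonneg hP hpol hρ0.1 t s)]
      exact aux_stateDist_le_one hP hpol hρ0 t s
    nlinarith [abs_nonneg (pol s a), abs_nonneg (g s a),
      mul_nonneg (abs_nonneg (pol s a)) (abs_nonneg (g s a))]
  have step1 : ∀ (s : S) (a : A), occupancy P pol ρ0 γ s a * g s a
      = (1 - γ) * ∑' t : ℕ, γ ^ t * stateDist P pol ρ0 t s * pol s a * g s a := by
    intro s a
    rw [occupancy, mul_assoc, ← tsum_mul_right]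
  rw [Finset.sum_congr rfl fun s _ => Finset.sum_congr rfl fun a _ => step1 s a]
  have step2 : ∑ s : S, ∑ a : A,
      (1 - γ) * ∑' t : ℕ, γ ^ t * stateDist P pol ρ0 t s * pol s a * g s a
      = (1 - γ) * ∑ s : S, ∑ a : A,
          ∑' t : ℕ, γ ^ t * stateDist P pol ρ0 t s * pol s a * g s a := by
    simp_rw [Finset.mul_sum]
  rw [step2]
  congr 1
  have hswap1 : ∀ s : S, ∑ a : A, ∑' t : ℕ, γ ^ t * stateDist P pol ρ0 t s * pol s a * g s a
      = ∑' t : ℕ, ∑ a : A, γ ^ t * stateDist P pol ρ0 t s * pol s a * g s a := by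
    intro s
    exact (Summable.tsum_finsetSum (fun a _ => hsumm s a)).symm
  rw [Finset.sum_congr rfl fun s _ => hswap1 s]
  rw [← Summable.tsum_finsetSum (fun s _ => summable_sum fun a _ => hsumm s a)]
  congr 1; funext t
  rw [Finset.mul_sum]
  congr 1; funext s
  rw [Finset.mul_sum, Finset.mul_sum]
  congr 1; funext a
  ring

lemma aux_D_step {Psrc Ptar : S → A → S → ℝ} {pol : S → A → ℝ} {ρ0 : S → ℝ}
    (hPsrc : IsKernel Psrc) (hPtar : IsKernel Ptar) (hpol : IsPolicy pol)
    (hρ0 : IsDist ρ0) (t : ℕ) :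
    ∑ s' : S, |stateDist Psrc pol ρ0 (t+1) s' - stateDist Ptar pol ρ0 (t+1) s'| ≤
      (∑ s : S, |stateDist Psrc pol ρ0 t s - stateDist Ptar pol ρ0 t s|) +
      2 * ∑ s : S, stateDist Psrc pol ρ0 t s *
        ∑ a : A, pol s a * tvDist (Psrc s a) (Ptar s a) := by
  set dS := stateDist Psrc pol ρ0 t with hdS
  set dT := stateDist Ptar pol ρ0 t with hdT
  have hstep : ∀ s', stateDist Psrc pol ρ0 (t+1) s' - stateDist Ptar pol ρ0 (t+1) s'
      = ∑ s : S, ∑ a : A, ((dS s - dT s) * pol s a * Ptar s a s'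
          + dS s * pol s a * (Psrc s a s' - Ptar s a s')) := by
    intro s'
    show (∑ s : S, ∑ a : A, dS s * pol s a * Psrc s a s')
        - (∑ s : S, ∑ a : A, dT s * pol s a * Ptar s a s') = _
    rw [← Finset.sum_sub_distrib]
    refine Finset.sum_congr rfl fun s _ => ?_
    rw [← Finset.sum_sub_distrib]
    exact Finset.sum_congr rfl fun a _ => by ring
  have habs : ∀ s', |stateDist Psrc pol ρ0 (t+1) s' - stateDist Ptar pol ρ0 (t+1) s'|
      ≤ ∑ s : S, ∑ a : A, (|dS s - dT s| * pol s a * Ptar s a s'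
          + dS s * pol s a * |Psrc s a s' - Ptar s a s'|) := by
    intro s'
    rw [hstep s']
    refine (Finset.abs_sum_le_sum_abs _ _).trans (Finset.sum_le_sum fun s _ => ?_)
    refine (Finset.abs_sum_le_sum_abs _ _).trans (Finset.sum_le_sum fun a _ => ?_)
    refine (abs_add_le _ _).trans ?_
    have h1 : |(dS s - dT s) * pol s a * Ptar s a s'|
        = |dS s - dT s| * pol s a * Ptar s a s' := by
      rw [abs_mul, abs_mul, abs_of_nonneg ((hpol s).1 a), abs_of_nonneg ((hPtar s a).1 s')]
    have h2 : |dS s * pol s a * (Psrc s a s' - Ptar s a s')|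
        = dS s * pol s a * |Psrc s a s' - Ptar s a s'| := by
      rw [abs_mul, abs_mul, abs_of_nonneg (aux_stateDist_nonneg hPsrc hpol hρ0.1 t s),
        abs_of_nonneg ((hpol s).1 a)]
    rw [h1, h2]
  calc ∑ s' : S, |stateDist Psrc pol ρ0 (t+1) s' - stateDist Ptar pol ρ0 (t+1) s'|
      ≤ ∑ s' : S, ∑ s : S, ∑ a : A, (|dS s - dT s| * pol s a * Ptar s a s'
          + dS s * pol s a * |Psrc s a s' - Ptar s a s'|) :=
        Finset.sum_le_sum fun s' _ => habs s'
    _ = (∑ s : S, |dS s - dT s|) + 2 * ∑ s : S, dS s *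
          ∑ a : A, pol s a * tvDist (Psrc s a) (Ptar s a) := by
        rw [Finset.sum_comm]
        have hper : ∀ s : S, ∑ s' : S, ∑ a : A, (|dS s - dT s| * pol s a * Ptar s a s'
            + dS s * pol s a * |Psrc s a s' - Ptar s a s'|)
            = |dS s - dT s| + dS s * ∑ a : A, pol s a * (2 * tvDist (Psrc s a) (Ptar s a)) := by
          intro s
          rw [Finset.sum_comm]
          have hpera : ∀ a : A, ∑ s' : S, (|dS s - dT s| * pol s a * Ptar s a s'
              + dS s * pol s a * |Psrc s a s' - Ptar s a s'|)
              = |dS s - dT s| * pol s a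
                + dS s * (pol s a * (2 * tvDist (Psrc s a) (Ptar s a))) := by
            intro a
            rw [Finset.sum_add_distrib, ← Finset.mul_sum, ← Finset.mul_sum, (hPtar s a).2,
              mul_one]
            congr 1
            have htv : ∑ s' : S, |Psrc s a s' - Ptar s a s'|
                = 2 * tvDist (Psrc s a) (Ptar s a) := by
              simp only [tvDist]; ring
            rw [htv]; ring
          rw [Finset.sum_congr rfl fun a _ => hpera a, Finset.sum_add_distrib,
            ← Finset.mul_sum, (hpol s).2, mul_one, ← Finset.mul_sum]
        rw [Finset.sum_congr rfl fun s _ => hper s, Finset.sum_add_distrib]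
        congr 1
        rw [Finset.mul_sum]
        refine Finset.sum_congr rfl fun s _ => ?_
        rw [Finset.mul_sum, Finset.mul_sum, Finset.mul_sum]
        refine Finset.sum_congr rfl fun a _ => by ring

lemma aux_fdiff_bound (rmax : ℝ) (rpi : S → ℝ) (hrpi : ∀ s, 0 ≤ rpi s ∧ rpi s ≤ rmax)
    (dS dT : S → ℝ) (hS1 : ∑ s : S, dS s = 1) (hT1 : ∑ s : S, dT s = 1) :
    |(∑ s : S, dS s * rpi s) - ∑ s : S, dT s * rpi s| ≤
      rmax / 2 * ∑ s : S, |dS s - dT s| := by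
  have he : (∑ s : S, dS s * rpi s) - ∑ s : S, dT s * rpi s
      = ∑ s : S, (dS s - dT s) * (rpi s - rmax / 2) := by
    have expand : ∀ s : S, (dS s - dT s) * (rpi s - rmax / 2)
        = (dS s * rpi s - dT s * rpi s) - (rmax/2) * dS s + (rmax/2) * dT s := by
      intro s; ring
    rw [Finset.sum_congr rfl fun s _ => expand s, Finset.sum_add_distrib,
      Finset.sum_sub_distrib, Finset.sum_sub_distrib, ← Finset.mul_sum, ← Finset.mul_sum,
      hS1, hT1]
    ring
  rw [he]
  refine (Finset.abs_sum_le_sum_abs _ _).trans ?_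
  rw [Finset.mul_sum]
  refine Finset.sum_le_sum fun s _ => ?_
  rw [abs_mul]
  have h1 : |rpi s - rmax / 2| ≤ rmax / 2 := by
    have := (hrpi s).1; have := (hrpi s).2
    rw [abs_le]; constructor <;> linarith
  calc |dS s - dT s| * |rpi s - rmax / 2| ≤ |dS s - dT s| * (rmax / 2) :=
        mul_le_mul_of_nonneg_left h1 (abs_nonneg _)
    _ = rmax / 2 * |dS s - dT s| := by ring

end MDPAux

lemma aux_weighted_cs {ι : Type} [Fintype ι] (w u v : ι → ℝ) (hw : ∀ i, 0 ≤ w i)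
    (hw1 : ∑ i : ι, w i = 1) (hu : ∀ i, 0 ≤ u i) (huv : ∀ i, u i ^ 2 ≤ v i) :
    ∑ i : ι, w i * u i ≤ Real.sqrt (∑ i : ι, w i * v i) := by
  have hwu : 0 ≤ ∑ i : ι, w i * u i :=
    Finset.sum_nonneg fun i _ => mul_nonneg (hw i) (hu i)
  have hwv : 0 ≤ ∑ i : ι, w i * v i :=
    Finset.sum_nonneg fun i _ => mul_nonneg (hw i) ((sq_nonneg (u i)).trans (huv i))
  rw [Real.le_sqrt hwu hwv]
  have hcs := Finset.sum_mul_sq_le_sq_mul_sq Finset.univ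
    (fun i => Real.sqrt (w i)) (fun i => Real.sqrt (w i) * u i)
  have e1 : ∀ i, Real.sqrt (w i) * (Real.sqrt (w i) * u i) = w i * u i := by
    intro i
    rw [← mul_assoc, Real.mul_self_sqrt (hw i)]
  have e2 : ∀ i, Real.sqrt (w i) ^ 2 = w i := fun i => Real.sq_sqrt (hw i)
  have e3 : ∀ i, (Real.sqrt (w i) * u i) ^ 2 = w i * u i ^ 2 := by
    intro i
    rw [mul_pow, Real.sq_sqrt (hw i)]
  rw [Finset.sum_congr rfl fun i _ => e1 i, Finset.sum_congr rfl fun i _ => e2 i,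
    Finset.sum_congr rfl fun i _ => e3 i, hw1, one_mul] at hcs
  calc (∑ i : ι, w i * u i) ^ 2 ≤ ∑ i : ι, w i * u i ^ 2 := hcs
    _ ≤ ∑ i : ι, w i * v i :=
        Finset.sum_le_sum fun i _ => mul_le_mul_of_nonneg_left (huv i) (hw i)

theorem performance_bound_pinsker {S A : Type} [Fintype S] [Fintype A]
    (Psrc Ptar : S → A → S → ℝ) (pol : S → A → ℝ) (ρ0 : S → ℝ) (γ : ℝ)
    (r : S → A → ℝ) (rmax : ℝ)
    (hPsrc : IsKernel Psrc) (hPtar : IsKernel Ptar) (hpol : IsPolicy pol) (hρ0 : IsDist ρ0)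
    (hγ0 : 0 ≤ γ) (hγ1 : γ < 1)
    (hr : ∀ s a, 0 ≤ r s a ∧ r s a ≤ rmax)
    (habs : ∀ s a s', 0 < Psrc s a s' → 0 < Ptar s a s') :
    ret Ptar pol ρ0 γ r ≥
      ret Psrc pol ρ0 γ r -
        (γ * rmax / (1 - γ) ^ 2) *
          Real.sqrt (2 * ∑ s : S, ∑ a : A, occupancy Psrc pol ρ0 γ s a *
            klDiv (Psrc s a) (Ptar s a)) := by
  have h1γ : 0 < 1 - γ := by linarith
  -- nonemptiness and rmax ≥ 0
  have hS : Nonempty S := by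
    by_contra h
    rw [not_nonempty_iff] at h
    have h2 := hρ0.2
    rw [Finset.univ_eq_empty, Finset.sum_empty] at h2
    norm_num at h2
  obtain ⟨s0⟩ := hS
  have hA : Nonempty A := by
    by_contra h
    rw [not_nonempty_iff] at h
    have h2 := (hpol s0).2
    rw [Finset.univ_eq_empty, Finset.sum_empty] at h2
    norm_num at h2
  obtain ⟨a0⟩ := hA
  have hrmax : 0 ≤ rmax := le_trans (hr s0 a0).1 (hr s0 a0).2
  -- abbreviations (as plain functions, definitionally transparent)
  set dS : ℕ → S → ℝ := stateDist Psrc pol ρ0 with hdSdef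
  set dT : ℕ → S → ℝ := stateDist Ptar pol ρ0 with hdTdef
  have hdSnn : ∀ t s, 0 ≤ dS t s := aux_stateDist_nonneg hPsrc hpol hρ0.1
  have hdTnn : ∀ t s, 0 ≤ dT t s := aux_stateDist_nonneg hPtar hpol hρ0.1
  have hdSsum : ∀ t, ∑ s : S, dS t s = 1 := aux_stateDist_sum_one hPsrc hpol hρ0.2
  have hdTsum : ∀ t, ∑ s : S, dT t s = 1 := aux_stateDist_sum_one hPtar hpol hρ0.2
  set rpi : S → ℝ := fun s => ∑ a : A, pol s a * r s a with hrpidef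
  set tvf : S → A → ℝ := fun s a => tvDist (Psrc s a) (Ptar s a) with htvfdef
  set eps : ℕ → ℝ := fun t => ∑ s : S, dS t s * ∑ a : A, pol s a * tvf s a with hepsdef
  set Dt : ℕ → ℝ := fun t => ∑ s : S, |dS t s - dT t s| with hDtdef
  set fS : ℕ → ℝ := fun t => ∑ s : S, dS t s * rpi s with hfSdef
  set fT : ℕ → ℝ := fun t => ∑ s : S, dT t s * rpi s with hfTdef
  -- tv facts
  have htvnn : ∀ (s : S) (a : A), 0 ≤ tvf s a := by
    intro s a
    apply mul_nonneg (by norm_num)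
    exact Finset.sum_nonneg fun x _ => abs_nonneg _
  have htv1 : ∀ (s : S) (a : A), tvf s a ≤ 1 := by
    intro s a
    have hle : ∑ x : S, |Psrc s a x - Ptar s a x| ≤ ∑ x : S, (Psrc s a x + Ptar s a x) := by
      refine Finset.sum_le_sum fun x _ => ?_
      have := (abs_sub (Psrc s a x) (Ptar s a x))
      rw [abs_of_nonneg ((hPsrc s a).1 x), abs_of_nonneg ((hPtar s a).1 x)] at this
      exact this
    have hsum2 : ∑ x : S, (Psrc s a x + Ptar s a x) = 2 := by
      rw [Finset.sum_add_distrib, (hPsrc s a).2, (hPtar s a).2]; norm_num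
    show (1/2 : ℝ) * ∑ x : S, |Psrc s a x - Ptar s a x| ≤ 1
    rw [hsum2] at hle
    linarith
  have hpinsker : ∀ (s : S) (a : A), tvf s a ^ 2 ≤ 2 * klDiv (Psrc s a) (Ptar s a) :=
    fun s a => aux_pinsker _ _ (hPsrc s a).1 (hPtar s a).1 (hPsrc s a).2 (hPtar s a).2
      (habs s a)
  -- rpi facts
  have hrpib : ∀ s, 0 ≤ rpi s ∧ rpi s ≤ rmax := by
    intro s
    constructor
    · exact Finset.sum_nonneg fun a _ => mul_nonneg ((hpol s).1 a) (hr s a).1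
    · calc ∑ a : A, pol s a * r s a ≤ ∑ a : A, pol s a * rmax :=
            Finset.sum_le_sum fun a _ => mul_le_mul_of_nonneg_left (hr s a).2 ((hpol s).1 a)
        _ = rmax := by rw [← Finset.sum_mul, (hpol s).2, one_mul]
  -- eps, Dt, fS, fT bounds
  have hepsnn : ∀ t, 0 ≤ eps t := by
    intro t
    refine Finset.sum_nonneg fun s _ => mul_nonneg (hdSnn t s) ?_
    exact Finset.sum_nonneg fun a _ => mul_nonneg ((hpol s).1 a) (htvnn s a)
  have heps1 : ∀ t, eps t ≤ 1 := by
    intro t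
    calc eps t ≤ ∑ s : S, dS t s * 1 := by
          refine Finset.sum_le_sum fun s _ => mul_le_mul_of_nonneg_left ?_ (hdSnn t s)
          calc ∑ a : A, pol s a * tvf s a ≤ ∑ a : A, pol s a * 1 :=
                Finset.sum_le_sum fun a _ =>
                  mul_le_mul_of_nonneg_left (htv1 s a) ((hpol s).1 a)
            _ = 1 := by rw [← Finset.sum_mul, (hpol s).2, one_mul]
      _ = 1 := by rw [← Finset.sum_mul, hdSsum t, one_mul]
  have hDtnn : ∀ t, 0 ≤ Dt t := fun t => Finset.sum_nonneg fun s _ => abs_nonneg _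
  have hDt2 : ∀ t, Dt t ≤ 2 := by
    intro t
    calc Dt t ≤ ∑ s : S, (dS t s + dT t s) := by
          refine Finset.sum_le_sum fun s _ => ?_
          have := abs_sub (dS t s) (dT t s)
          rw [abs_of_nonneg (hdSnn t s), abs_of_nonneg (hdTnn t s)] at this
          exact this
      _ = 2 := by rw [Finset.sum_add_distrib, hdSsum t, hdTsum t]; norm_num
  have hfSb : ∀ t, |fS t| ≤ rmax := by
    intro t
    rw [abs_le]
    constructor
    · have : 0 ≤ fS t := Finset.sum_nonneg fun s _ => mul_nonneg (hdSnn t s) (hrpib s).1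
      linarith
    · calc fS t ≤ ∑ s : S, dS t s * rmax :=
            Finset.sum_le_sum fun s _ => mul_le_mul_of_nonneg_left (hrpib s).2 (hdSnn t s)
        _ = rmax := by rw [← Finset.sum_mul, hdSsum t, one_mul]
  have hfTb : ∀ t, |fT t| ≤ rmax := by
    intro t
    rw [abs_le]
    constructor
    · have : 0 ≤ fT t := Finset.sum_nonneg fun s _ => mul_nonneg (hdTnn t s) (hrpib s).1
      linarith
    · calc fT t ≤ ∑ s : S, dT t s * rmax :=
            Finset.sum_le_sum fun s _ => mul_le_mul_of_nonneg_left (hrpib s).2 (hdTnn t s)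
        _ = rmax := by rw [← Finset.sum_mul, hdTsum t, one_mul]
  -- summabilities
  have sD : Summable (fun t => γ ^ t * Dt t) :=
    aux_summable_geom_bound hγ0 hγ1 _ 2 fun t => by
      rw [abs_of_nonneg (hDtnn t)]; exact hDt2 t
  have sE : Summable (fun t => γ ^ t * eps t) :=
    aux_summable_geom_bound hγ0 hγ1 _ 1 fun t => by
      rw [abs_of_nonneg (hepsnn t)]; exact heps1 t
  have sfS : Summable (fun t => γ ^ t * fS t) :=
    aux_summable_geom_bound hγ0 hγ1 _ rmax hfSb
  have sfT : Summable (fun t => γ ^ t * fT t) :=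
    aux_summable_geom_bound hγ0 hγ1 _ rmax hfTb
  have sD1 : Summable (fun t => γ ^ (t+1) * Dt (t+1)) := by
    have heq : (fun t => γ ^ (t+1) * Dt (t+1)) = fun t => γ ^ t * (γ * Dt (t+1)) := by
      funext t; ring
    rw [heq]
    apply aux_summable_geom_bound hγ0 hγ1 _ 2
    intro t
    rw [abs_mul, abs_of_nonneg hγ0, abs_of_nonneg (hDtnn (t+1))]
    nlinarith [hDt2 (t+1), hDtnn (t+1)]
  -- the discounted recursion
  have hD0 : Dt 0 = 0 := by
    have : ∀ s : S, dS 0 s - dT 0 s = 0 := by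
      intro s
      show stateDist Psrc pol ρ0 0 s - stateDist Ptar pol ρ0 0 s = 0
      simp [stateDist]
    simp only [hDtdef]
    rw [Finset.sum_congr rfl fun s _ => by rw [this s, abs_zero]]
    exact Finset.sum_const_zero
  have hGrec : ∑' t, γ ^ t * Dt t ≤
      γ * ∑' t, γ ^ t * Dt t + 2 * γ * ∑' t, γ ^ t * eps t := by
    have h0 : γ ^ 0 * Dt 0 = 0 := by rw [hD0]; ring
    have hsplit : ∑' t, γ ^ t * Dt t = ∑' t, γ ^ (t+1) * Dt (t+1) := by
      rw [Summable.tsum_eq_zero_add sD, h0, zero_add]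
    have hle : ∀ t, γ ^ (t+1) * Dt (t+1) ≤ γ * (γ ^ t * Dt t) + 2 * γ * (γ ^ t * eps t) := by
      intro t
      have hstep : Dt (t+1) ≤ Dt t + 2 * eps t := aux_D_step hPsrc hPtar hpol hρ0 t
      have hpow : (0:ℝ) ≤ γ ^ (t+1) := pow_nonneg hγ0 _
      calc γ ^ (t+1) * Dt (t+1) ≤ γ ^ (t+1) * (Dt t + 2 * eps t) :=
            mul_le_mul_of_nonneg_left hstep hpow
        _ = γ * (γ ^ t * Dt t) + 2 * γ * (γ ^ t * eps t) := by ring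
    calc ∑' t, γ ^ t * Dt t = ∑' t, γ ^ (t+1) * Dt (t+1) := hsplit
      _ ≤ ∑' t, (γ * (γ ^ t * Dt t) + 2 * γ * (γ ^ t * eps t)) :=
          Summable.tsum_le_tsum hle sD1 ((sD.mul_left γ).add (sE.mul_left (2 * γ)))
      _ = γ * ∑' t, γ ^ t * Dt t + 2 * γ * ∑' t, γ ^ t * eps t := by
          rw [Summable.tsum_add (sD.mul_left γ) (sE.mul_left (2 * γ)), tsum_mul_left, tsum_mul_left]
  have hGb : (1 - γ) * ∑' t, γ ^ t * Dt t ≤ 2 * γ * ∑' t, γ ^ t * eps t := by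
    nlinarith [hGrec]
  -- ret identities
  have hretS : ret Psrc pol ρ0 γ r = (1 - γ) * ∑' t, γ ^ t * fS t :=
    aux_occ_sum_eq hPsrc hpol hρ0 hγ0 hγ1 r
  have hretT : ret Ptar pol ρ0 γ r = (1 - γ) * ∑' t, γ ^ t * fT t :=
    aux_occ_sum_eq hPtar hpol hρ0 hγ0 hγ1 r
  have hdiff : ret Psrc pol ρ0 γ r - ret Ptar pol ρ0 γ r
      = (1 - γ) * ∑' t, (γ ^ t * fS t - γ ^ t * fT t) := by
    rw [hretS, hretT, ← mul_sub, Summable.tsum_sub sfS sfT]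
  have hstep2 : ∑' t, (γ ^ t * fS t - γ ^ t * fT t) ≤ rmax / 2 * ∑' t, γ ^ t * Dt t := by
    have hmid : ∑' t, (γ ^ t * fS t - γ ^ t * fT t) ≤ ∑' t, γ ^ t * (rmax / 2 * Dt t) := by
      refine Summable.tsum_le_tsum ?_ (sfS.sub sfT) ?_
      · intro t
        have hfd : |fS t - fT t| ≤ rmax / 2 * Dt t :=
          aux_fdiff_bound rmax rpi hrpib (dS t) (dT t) (hdSsum t) (hdTsum t)
        have heq : γ ^ t * fS t - γ ^ t * fT t = γ ^ t * (fS t - fT t) := by ring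
        rw [heq]
        calc γ ^ t * (fS t - fT t) ≤ γ ^ t * |fS t - fT t| :=
              mul_le_mul_of_nonneg_left (le_abs_self _) (pow_nonneg hγ0 t)
          _ ≤ γ ^ t * (rmax / 2 * Dt t) :=
              mul_le_mul_of_nonneg_left hfd (pow_nonneg hγ0 t)
      · have heq : (fun t => γ ^ t * (rmax / 2 * Dt t))
            = fun t => rmax / 2 * (γ ^ t * Dt t) := by funext t; ring
        rw [heq]
        exact sD.mul_left _
    have heq2 : ∑' t, γ ^ t * (rmax / 2 * Dt t) = rmax / 2 * ∑' t, γ ^ t * Dt t := by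
      rw [← tsum_mul_left]
      exact tsum_congr fun t => by ring
    linarith [hmid, heq2.le, heq2.ge]
  -- occupancy facts
  have hoccnn : ∀ (s : S) (a : A), 0 ≤ occupancy Psrc pol ρ0 γ s a := by
    intro s a
    apply mul_nonneg h1γ.le
    apply tsum_nonneg
    intro t
    exact mul_nonneg (mul_nonneg (pow_nonneg hγ0 t) (hdSnn t s)) ((hpol s).1 a)
  have hocc1 : ∑ s : S, ∑ a : A, occupancy Psrc pol ρ0 γ s a = 1 := by
    have h := aux_occ_sum_eq hPsrc hpol hρ0 hγ0 hγ1 (fun _ _ => (1:ℝ))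
    simp only [mul_one] at h
    rw [h]
    have hconst : ∀ t : ℕ, γ ^ t * ∑ s : S, dS t s * ∑ a : A, pol s a = γ ^ t := by
      intro t
      have hin : ∀ s : S, dS t s * ∑ a : A, pol s a = dS t s := by
        intro s; rw [(hpol s).2, mul_one]
      rw [Finset.sum_congr rfl fun s _ => hin s, hdSsum t, mul_one]
    rw [tsum_congr hconst, tsum_geometric_of_lt_one hγ0 hγ1,
      mul_inv_cancel₀ (ne_of_gt h1γ)]
  -- E identity
  have hE : ∑ s : S, ∑ a : A, occupancy Psrc pol ρ0 γ s a * tvf s a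
      = (1 - γ) * ∑' t, γ ^ t * eps t :=
    aux_occ_sum_eq hPsrc hpol hρ0 hγ0 hγ1 tvf
  -- Cauchy-Schwarz / Pinsker step
  have hcsfinal : ∑ s : S, ∑ a : A, occupancy Psrc pol ρ0 γ s a * tvf s a
      ≤ Real.sqrt (2 * ∑ s : S, ∑ a : A, occupancy Psrc pol ρ0 γ s a *
          klDiv (Psrc s a) (Ptar s a)) := by
    have hw := aux_weighted_cs (fun p : S × A => occupancy Psrc pol ρ0 γ p.1 p.2)
      (fun p => tvf p.1 p.2) (fun p => 2 * klDiv (Psrc p.1 p.2) (Ptar p.1 p.2))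
      (fun p => hoccnn p.1 p.2)
      (by rw [Fintype.sum_prod_type]; exact hocc1)
      (fun p => htvnn p.1 p.2) (fun p => hpinsker p.1 p.2)
    rw [Fintype.sum_prod_type, Fintype.sum_prod_type] at hw
    have heqK : ∑ s : S, ∑ a : A, occupancy Psrc pol ρ0 γ s a *
          (2 * klDiv (Psrc s a) (Ptar s a))
        = 2 * ∑ s : S, ∑ a : A, occupancy Psrc pol ρ0 γ s a *
            klDiv (Psrc s a) (Ptar s a) := by
      rw [Finset.mul_sum]
      refine Finset.sum_congr rfl fun s _ => ?_
      rw [Finset.mul_sum]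
      exact Finset.sum_congr rfl fun a _ => by ring
    rw [heqK] at hw
    exact hw
  -- final chain
  set K := ∑ s : S, ∑ a : A, occupancy Psrc pol ρ0 γ s a * klDiv (Psrc s a) (Ptar s a)
    with hKdef
  have hsqrtnn : 0 ≤ Real.sqrt (2 * K) := Real.sqrt_nonneg _
  have hchain : ret Psrc pol ρ0 γ r - ret Ptar pol ρ0 γ r
      ≤ γ * rmax / (1 - γ) * Real.sqrt (2 * K) := by
    have h1 : ret Psrc pol ρ0 γ r - ret Ptar pol ρ0 γ r
        ≤ (1 - γ) * (rmax / 2 * ∑' t, γ ^ t * Dt t) := by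
      rw [hdiff]
      exact mul_le_mul_of_nonneg_left hstep2 h1γ.le
    have h2 : (1 - γ) * (rmax / 2 * ∑' t, γ ^ t * Dt t)
        ≤ rmax / 2 * (2 * γ * ∑' t, γ ^ t * eps t) := by
      have := mul_le_mul_of_nonneg_left hGb (by positivity : (0:ℝ) ≤ rmax / 2)
      nlinarith [this]
    have h3 : rmax / 2 * (2 * γ * ∑' t, γ ^ t * eps t)
        = γ * rmax / (1 - γ) * ((1 - γ) * ∑' t, γ ^ t * eps t) := by
      field_simp
    have h4 : γ * rmax / (1 - γ) * ((1 - γ) * ∑' t, γ ^ t * eps t)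
        ≤ γ * rmax / (1 - γ) * Real.sqrt (2 * K) := by
      apply mul_le_mul_of_nonneg_left _ (by positivity)
      rw [← hE]
      exact hcsfinal
    linarith
  have hcoef : γ * rmax / (1 - γ) * Real.sqrt (2 * K)
      ≤ γ * rmax / (1 - γ) ^ 2 * Real.sqrt (2 * K) := by
    apply mul_le_mul_of_nonneg_right _ hsqrtnn
    apply div_le_div_of_nonneg_left (by positivity) (by positivity)
    nlinarith [h1γ]
  linarith [hchain, hcoef]
end
end
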